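/- There is an isomorphism of abelian groups ℤ/8 ≅ W(ℤ/4) sending 1 to the class of [1]; in particular the symmetric Witt group of ℤ/4 is cyclic of order 8, generated by the class of the unit form [1]. -/

import Mathlib

set_option synthInstance.maxHeartbeats 1000000
set_option maxHeartbeats 1000000



noncomputable section

/-- The subgroup of squares of units of a commutative ring. -/
def squareUnits (R : Type) [CommRing R] : Subgroup Rˣ :=
  (powMonoidHom 2 : Rˣ →* Rˣ).range

/-- The group of square classes `Rˣ/(Rˣ)²`. -/
def SqCl (R : Type) [CommRing R] : Type := Rˣ ⧸ squareUnits R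

instance (R : Type) [CommRing R] : CommGroup (SqCl R) :=
  QuotientGroup.Quotient.commGroup (squareUnits R)

/-- The square class `[a]` of a unit `a`. -/
def cls {R : Type} [CommRing R] (a : Rˣ) : SqCl R := QuotientGroup.mk a

/-- The group ring `ℤ[Rˣ/(Rˣ)²]`. -/
abbrev GRing (R : Type) [CommRing R] := MonoidAlgebra ℤ (SqCl R)

/-- The generator `[a]` of the group ring, for a unit `a`. -/
def gen {R : Type} [CommRing R] (a : Rˣ) : GRing R :=
  MonoidAlgebra.of ℤ (SqCl R) (cls a)

/-- The set of relations defining the Grothendieck–Witt ring of a (connected semi-)local ring: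
`([a₁]+[a₂]+[a₃]+[a₄]) − ([b₁]+[b₂]+[b₃]+[b₄])` whenever there exists `P ∈ GL₄(R)` with
`P ⬝ diag(a₁,…,a₄) ⬝ Pᵀ = diag(b₁,…,b₄)`. -/
def gwRel (R : Type) [CommRing R] : Set (GRing R) :=
  {x | ∃ (a b : Fin 4 → Rˣ) (P : Matrix (Fin 4) (Fin 4) R),
    IsUnit P.det ∧
    P * Matrix.diagonal (fun i => (a i : R)) * P.transpose =
      Matrix.diagonal (fun i => (b i : R)) ∧
    x = (∑ i, gen (a i)) - (∑ i, gen (b i))}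

/-- The (symmetric) Grothendieck–Witt ring of `R`, presented à la Knebusch–Rosenberg–Ware. -/
abbrev GW (R : Type) [CommRing R] := GRing R ⧸ Ideal.span (gwRel R)

/-- The class `[a] ∈ GW(R)` of a unit `a`. -/
def gw {R : Type} [CommRing R] (a : Rˣ) : GW R :=
  Ideal.Quotient.mk (Ideal.span (gwRel R)) (gen a)

/-- The (symmetric) Witt ring of `R` : the quotient of `GW(R)` by the ideal generated by the
hyperbolic element `[1] + [-1]`. -/
abbrev Wr (R : Type) [CommRing R] := GW R ⧸ Ideal.span {gw (R := R) 1 + gw (-1)}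

/-- The class in the Witt ring of a unit `a`. -/
def wcl {R : Type} [CommRing R] (a : Rˣ) : Wr R :=
  Ideal.Quotient.mk (Ideal.span {gw (R := R) 1 + gw (-1)}) (gw a)

/-! ### Gauss sums over `ℤ/4` valued in the Gaussian integers -/

def psi (z : ZMod 4) : GaussianInt := (⟨0,1⟩ : GaussianInt) ^ z.val

lemma psi_add (a b : ZMod 4) : psi (a + b) = psi a * psi b := by
  have h4 : (⟨0,1⟩ : GaussianInt)^4 = 1 := by decide
  unfold psi
  rw [ZMod.val_add, ← pow_eq_pow_mod _ h4, pow_add]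

lemma psi_zero : psi 0 = 1 := by decide

lemma psi_sum {ι : Type*} (s : Finset ι) (f : ι → ZMod 4) :
    psi (∑ i ∈ s, f i) = ∏ i ∈ s, psi (f i) := by
  classical
  induction s using Finset.cons_induction with
  | empty => simp [psi_zero]
  | cons i s hi ih => rw [Finset.sum_cons, Finset.prod_cons, psi_add, ih]

def quadSum (M : Matrix (Fin 4) (Fin 4) (ZMod 4)) : GaussianInt :=
  ∑ x : Fin 4 → ZMod 4, psi (dotProduct x (M.mulVec x))

lemma quadSum_conj (M P : Matrix (Fin 4) (Fin 4) (ZMod 4)) (hP : IsUnit P.det) :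
    quadSum (P * M * P.transpose) = quadSum M := by
  have hPinv : P * P⁻¹ = 1 := Matrix.mul_nonsing_inv P hP
  have hPinv' : P⁻¹ * P = 1 := Matrix.nonsing_inv_mul P hP
  let e : (Fin 4 → ZMod 4) ≃ (Fin 4 → ZMod 4) :=
    { toFun := fun x => Matrix.vecMul x P
      invFun := fun x => Matrix.vecMul x P⁻¹
      left_inv := fun x => by simp [Matrix.vecMul_vecMul, hPinv]
      right_inv := fun x => by simp [Matrix.vecMul_vecMul, hPinv'] }
  have hterm : ∀ x : Fin 4 → ZMod 4,
      dotProduct x ((P * M * P.transpose).mulVec x)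
        = dotProduct (e x) (M.mulVec (e x)) := by
    intro x
    show dotProduct x ((P * M * P.transpose).mulVec x)
      = dotProduct (Matrix.vecMul x P) (M.mulVec (Matrix.vecMul x P))
    rw [Matrix.dotProduct_mulVec, Matrix.dotProduct_mulVec, Matrix.vecMul_vecMul,
      ← Matrix.vecMul_vecMul, Matrix.vecMul_transpose,
      dotProduct_comm, Matrix.dotProduct_mulVec, dotProduct_comm]
  calc quadSum (P * M * P.transpose)
      = ∑ x : Fin 4 → ZMod 4, psi (dotProduct (e x) (M.mulVec (e x))) := by
        unfold quadSum; exact Finset.sum_congr rfl (fun x _ => by rw [hterm x])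
    _ = quadSum M := Equiv.sum_comp e (fun y => psi (dotProduct y (M.mulVec y)))

lemma quadSum_diagonal (d : Fin 4 → ZMod 4) :
    quadSum (Matrix.diagonal d) = ∏ i, ∑ t : ZMod 4, psi (d i * t * t) := by
  have h : ∀ i : Fin 4, (∑ t : ZMod 4, psi (d i * t * t)) = ∑ t : ZMod 4, psi (t * (d i * t)) := by
    intro i
    exact Finset.sum_congr rfl (fun t _ => by ring_nf)
  rw [Finset.prod_congr rfl (fun i _ => h i), Finset.prod_univ_sum]
  rw [Fintype.piFinset_univ]
  unfold quadSum
  refine Finset.sum_congr rfl (fun x _ => ?_)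
  rw [show dotProduct x ((Matrix.diagonal d).mulVec x) = ∑ i, x i * (d i * x i) from ?_,
    psi_sum]
  unfold dotProduct
  exact Finset.sum_congr rfl (fun i _ => by rw [Matrix.mulVec_diagonal])

/-! ### The mod 8 character on units of `ℤ/4` -/

def T (u : (ZMod 4)ˣ) : GaussianInt := if u = 1 then ⟨2,2⟩ else ⟨2,-2⟩

def chi (u : (ZMod 4)ˣ) : ZMod 8 := if u = 1 then 1 else -1

lemma S_eq : ∀ u : (ZMod 4)ˣ, (∑ t : ZMod 4, psi ((u : ZMod 4) * t * t)) = T u := by decide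

set_option maxHeartbeats 2000000 in
lemma key : ∀ a b : Fin 4 → (ZMod 4)ˣ,
    (∏ i, T (a i)) = (∏ i, T (b i)) → (∑ i, chi (a i)) = ∑ i, chi (b i) := by decide

def chiU : (ZMod 4)ˣ →* (ZMod 8)ˣ where
  toFun u := if u = 1 then 1 else -1
  map_one' := by decide
  map_mul' := by decide

lemma chiU_coe : ∀ u : (ZMod 4)ˣ, ((chiU u : (ZMod 8)ˣ) : ZMod 8) = chi u := by decide

def chiBar : SqCl (ZMod 4) →* (ZMod 8)ˣ :=
  QuotientGroup.lift (squareUnits (ZMod 4)) chiU (by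
    intro x hx
    obtain ⟨y, rfl⟩ := hx
    show chiU (y ^ 2) = 1
    rw [map_pow]
    revert y
    decide)

/-- The character ring hom from the group ring to `ℤ/8`. -/
def phi : GRing (ZMod 4) →+* ZMod 8 :=
  ((MonoidAlgebra.lift ℤ (ZMod 8) (SqCl (ZMod 4)))
    ((Units.coeHom (ZMod 8)).comp chiBar)).toRingHom

lemma phi_gen (u : (ZMod 4)ˣ) : phi (gen u) = chi u := by
  have h : phi (gen u) = ((chiBar (cls u) : (ZMod 8)ˣ) : ZMod 8) := by
    simp [phi, gen, MonoidAlgebra.lift_of]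
  rw [h]
  show ((chiU u : (ZMod 8)ˣ) : ZMod 8) = chi u
  exact chiU_coe u

lemma relzero : ∀ x ∈ gwRel (ZMod 4), phi x = 0 := by
  rintro x ⟨a, b, P, hdet, hPMP, rfl⟩
  have hq : quadSum (Matrix.diagonal fun i => ((a i : ZMod 4)))
      = quadSum (Matrix.diagonal fun i => ((b i : ZMod 4))) := by
    rw [← hPMP, quadSum_conj _ _ hdet]
  have hq' : (∏ i, T (a i)) = ∏ i, T (b i) := by
    have ha := quadSum_diagonal (fun i => ((a i : ZMod 4)))
    have hb := quadSum_diagonal (fun i => ((b i : ZMod 4)))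
    rw [Finset.prod_congr rfl (fun i _ => (S_eq (a i)).symm),
      Finset.prod_congr rfl (fun i _ => (S_eq (b i)).symm), ← ha, ← hb, hq]
  have hchi := key a b hq'
  rw [map_sub, map_sum, map_sum]
  rw [Finset.sum_congr rfl (fun i _ => phi_gen (a i)),
    Finset.sum_congr rfl (fun i _ => phi_gen (b i)), hchi, sub_self]

def PhiGW : GW (ZMod 4) →+* ZMod 8 :=
  Ideal.Quotient.lift (Ideal.span (gwRel (ZMod 4))) phi (by
    intro a ha
    have h : Ideal.span (gwRel (ZMod 4)) ≤ RingHom.ker phi :=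
      Ideal.span_le.mpr (fun x hx => relzero x hx)
    exact RingHom.mem_ker.mp (h ha))

lemma PhiGW_gw (u : (ZMod 4)ˣ) : PhiGW (gw u) = chi u := by
  rw [gw, PhiGW, Ideal.Quotient.lift_mk, phi_gen]

def PhiW : Wr (ZMod 4) →+* ZMod 8 :=
  Ideal.Quotient.lift (Ideal.span {gw (R := ZMod 4) 1 + gw (-1)}) PhiGW (by
    intro a ha
    have h : Ideal.span {gw (R := ZMod 4) 1 + gw (-1)} ≤ RingHom.ker PhiGW := by
      rw [Ideal.span_le, Set.singleton_subset_iff]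
      show PhiGW (gw 1 + gw (-1)) = 0
      rw [map_add, PhiGW_gw, PhiGW_gw]
      decide
    exact RingHom.mem_ker.mp (h ha))

lemma PhiW_wcl (u : (ZMod 4)ˣ) : PhiW (wcl u) = chi u := by
  rw [wcl, PhiW, Ideal.Quotient.lift_mk, PhiGW_gw]

/-! ### Torsion and generation -/

def piW : GRing (ZMod 4) →+* Wr (ZMod 4) :=
  (Ideal.Quotient.mk (Ideal.span {gw (R := ZMod 4) 1 + gw (-1)})).comp
    (Ideal.Quotient.mk (Ideal.span (gwRel (ZMod 4))))

lemma piW_gen (u : (ZMod 4)ˣ) : piW (gen u) = wcl u := rfl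

lemma hyp : wcl (1 : (ZMod 4)ˣ) + wcl (-1) = 0 := by
  rw [wcl, wcl, ← map_add, Ideal.Quotient.eq_zero_iff_mem]
  exact Ideal.subset_span rfl

lemma wcl_neg_one : wcl (-1 : (ZMod 4)ˣ) = -wcl 1 :=
  (neg_eq_of_add_eq_zero_right hyp).symm

def P0 : Matrix (Fin 4) (Fin 4) (ZMod 4) := !![1,1,1,0; 1,3,0,1; 1,0,3,3; 0,1,3,1]
def Q0 : Matrix (Fin 4) (Fin 4) (ZMod 4) := !![3,3,3,0; 3,1,0,3; 3,0,1,1; 0,3,1,3]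

lemma rel0 : ((∑ _i : Fin 4, gen (1 : (ZMod 4)ˣ)) - ∑ _i : Fin 4, gen (-1 : (ZMod 4)ˣ))
    ∈ gwRel (ZMod 4) := by
  refine ⟨fun _ => 1, fun _ => -1, P0, Matrix.isUnit_det_of_right_inverse
    (by decide : P0 * Q0 = 1), by decide, rfl⟩

lemma tor8 : ((8 : ℕ) : ℤ) • wcl (1 : (ZMod 4)ˣ) = 0 := by
  have h0 : piW ((∑ _i : Fin 4, gen (1 : (ZMod 4)ˣ)) - ∑ _i : Fin 4, gen (-1 : (ZMod 4)ˣ)) = 0 := by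
    rw [piW, RingHom.comp_apply, Ideal.Quotient.eq_zero_iff_mem]
    have : (Ideal.Quotient.mk (Ideal.span (gwRel (ZMod 4))))
        ((∑ _i : Fin 4, gen (1 : (ZMod 4)ˣ)) - ∑ _i : Fin 4, gen (-1 : (ZMod 4)ˣ)) = 0 :=
      Ideal.Quotient.eq_zero_iff_mem.mpr (Ideal.subset_span rel0)
    rw [this]
    exact Ideal.zero_mem _
  rw [map_sub, map_sum, map_sum] at h0
  simp only [piW_gen, Finset.sum_const, Finset.card_univ, Fintype.card_fin] at h0
  rw [wcl_neg_one, smul_neg, sub_neg_eq_add] at h0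
  rw [Nat.cast_smul_eq_nsmul, show (8 : ℕ) = 4 + 4 from rfl, add_nsmul, h0]

lemma wr_gen : ∀ x : Wr (ZMod 4), ∃ k : ℤ, x = k • wcl (1 : (ZMod 4)ˣ) := by
  have hsurj : Function.Surjective piW := by
    apply Function.Surjective.comp (g := Ideal.Quotient.mk _)
    · exact Ideal.Quotient.mk_surjective
    · exact Ideal.Quotient.mk_surjective
  intro x
  obtain ⟨y, rfl⟩ := hsurj x
  induction y using MonoidAlgebra.induction_on with
  | of g =>
    obtain ⟨u, rfl⟩ := QuotientGroup.mk_surjective g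
    have hu : u = 1 ∨ u = -1 := by revert u; decide
    rcases hu with rfl | rfl
    · exact ⟨1, by rw [one_smul]; rfl⟩
    · refine ⟨-1, ?_⟩
      rw [neg_one_zsmul, ← wcl_neg_one]
      rfl
  | add f g hf hg =>
    obtain ⟨k, hk⟩ := hf
    obtain ⟨l, hl⟩ := hg
    exact ⟨k + l, by rw [map_add, hk, hl, add_smul]⟩
  | smul r f hf =>
    obtain ⟨k, hk⟩ := hf
    exact ⟨r * k, by rw [map_zsmul, hk, smul_smul]⟩

/-- The symmetric Witt group `W(ℤ/4)` is cyclic of order `8`, generated by the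
class of the unit form `[1]`: there is an isomorphism `ℤ/8 ≅ W(ℤ/4)` sending `1` to `[1]`. -/
theorem witt_zmod_four :
    ∃ e : ZMod 8 ≃+ Wr (ZMod 4),
      e 1 = wcl 1 := by
  have chi1 : chi 1 = 1 := rfl
  let f : ZMod 8 →+ Wr (ZMod 4) := ZMod.lift 8 ⟨zmultiplesHom _ (wcl (1 : (ZMod 4)ˣ)), tor8⟩
  have hf : ∀ k : ℤ, f ((k : ℤ) : ZMod 8) = k • wcl (1 : (ZMod 4)ˣ) := by
    intro k
    exact ZMod.lift_coe _ _ k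
  have left_inv : ∀ k : ZMod 8, PhiW (f k) = k := by
    intro k
    have hk : ((k.val : ℤ) : ZMod 8) = k := by
      push_cast
      rw [ZMod.natCast_val, ZMod.cast_id]
    rw [← hk, hf, map_zsmul, PhiW_wcl, chi1, zsmul_eq_mul, mul_one]
  have right_inv : ∀ x : Wr (ZMod 4), f (PhiW x) = x := by
    intro x
    obtain ⟨k, rfl⟩ := wr_gen x
    rw [map_zsmul, PhiW_wcl, chi1, zsmul_eq_mul, mul_one, hf]
  refine ⟨AddEquiv.mk' (Equiv.mk f PhiW left_inv right_inv) f.map_add, ?_⟩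
  show f 1 = wcl 1
  have : ((1 : ℤ) : ZMod 8) = 1 := by norm_num
  rw [← this, hf, one_smul]

end
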